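/- arXiv:0905.2023 — 4 statements merged into one kernel-verified Lean document; each statement's English description precedes it below -/
import Mathlib

section
/- Let α, γ, N, μ_T, μ_I, μ_V be positive real numbers and set R₀ = γαN/(μ_T μ_V). Consider the real 3×3 matrix A = [[−μ_T, 0, −γα/μ_T], [0, −μ_I, γα/μ_T], [0, N μ_I, −μ_V]] (the linearization of the basic ODE model of virus dynamics at the non-infected steady state (α/μ_T, 0, 0)). Then every complex eigenvalue of A has negative real part if and only if R₀ < 1. -/
/-- The linearization of the basic ODE model at the non-infected
steady state has all its (complex) eigenvalues with negative real part
if and only if the basic reproductive ratio `R₀ = γαN/(μ_T μ_V)` is `< 1`. -/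
theorem stmt_1 (α γ N μT μI μV : ℝ)
    (hα : 0 < α) (hγ : 0 < γ) (hN : 0 < N)
    (hμT : 0 < μT) (hμI : 0 < μI) (hμV : 0 < μV)
    (A : Matrix (Fin 3) (Fin 3) ℝ)
    (hA : A = !![-μT, 0, -γ * α / μT;
                 0, -μI, γ * α / μT;
                 0, N * μI, -μV]) :
    (∀ z ∈ spectrum ℂ (A.map (algebraMap ℝ ℂ)), z.re < 0) ↔
      γ * α * N / (μT * μV) < 1 := by
  set c : ℝ := μI * μV - N * μI * (γ * α / μT) with hc
  set b : ℝ := μI + μV with hb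
  have hbpos : 0 < b := by positivity
  have hRc : (γ * α * N / (μT * μV) < 1) ↔ 0 < c := by
    have hkey : c * μT = μI * (μT * μV - γ * α * N) := by
      rw [hc]; field_simp
    rw [div_lt_one (by positivity)]
    constructor
    · intro h
      nlinarith [hkey]
    · intro h
      nlinarith [hkey]
  -- spectrum characterization
  have hspec : ∀ z : ℂ, z ∈ spectrum ℂ (A.map (algebraMap ℝ ℂ)) ↔
      (z + μT) * (z ^ 2 + (b : ℝ) * z + (c : ℝ)) = 0 := by
    intro z
    rw [spectrum.mem_iff, Matrix.isUnit_iff_isUnit_det, isUnit_iff_ne_zero, not_ne_iff]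
    have hdet : ((algebraMap ℂ (Matrix (Fin 3) (Fin 3) ℂ)) z - A.map (algebraMap ℝ ℂ)).det
        = (z + μT) * (z ^ 2 + (b : ℝ) * z + (c : ℝ)) := by
      subst hA
      simp [Matrix.det_fin_three, Matrix.algebraMap_matrix_apply, hb, hc, Matrix.vecHead, Matrix.vecTail]
      push_cast
      ring
    rw [hdet]
  constructor
  · intro h
    rw [hRc]
    by_contra hcle
    push_neg at hcle
    set x : ℝ := (-b + Real.sqrt (b ^ 2 - 4 * c)) / 2 with hx
    have hsq : Real.sqrt (b ^ 2 - 4 * c) ^ 2 = b ^ 2 - 4 * c :=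
      Real.sq_sqrt (by nlinarith)
    have hxge : 0 ≤ x := by
      have h1 : Real.sqrt (b ^ 2) ≤ Real.sqrt (b ^ 2 - 4 * c) :=
        Real.sqrt_le_sqrt (by nlinarith)
      rw [Real.sqrt_sq hbpos.le] at h1
      rw [hx]; linarith
    have hroot : ((x : ℂ) + μT) * ((x : ℂ) ^ 2 + (b : ℝ) * x + (c : ℝ)) = 0 := by
      have hxq : x ^ 2 + b * x + c = 0 := by
        rw [hx]; linear_combination hsq / 4
      have : ((x : ℂ) ^ 2 + (b : ℝ) * x + (c : ℝ)) = ((x ^ 2 + b * x + c : ℝ) : ℂ) := by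
        push_cast; ring
      rw [this, hxq]
      simp
    have := h x ((hspec x).mpr hroot)
    simp at this
    linarith
  · intro hR z hz
    rw [hspec z] at hz
    have hcpos : 0 < c := hRc.mp hR
    rcases mul_eq_zero.mp hz with h1 | h2
    · have : z = -(μT : ℂ) := by linear_combination h1
      rw [this]
      simpa using hμT
    · -- real and imaginary parts
      have hre : z.re ^ 2 - z.im ^ 2 + b * z.re + c = 0 := by
        have := congrArg Complex.re h2
        simp [Complex.add_re, Complex.mul_re, pow_two] at this
        nlinarith [this]
      have him : z.im * (2 * z.re + b) = 0 := by
        have := congrArg Complex.im h2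
        simp [Complex.add_im, Complex.mul_im, pow_two] at this
        nlinarith [this]
      by_contra hxge
      push_neg at hxge
      rcases mul_eq_zero.mp him with hy | hxb
      · rw [hy] at hre; nlinarith
      · nlinarith
end

section
/- Fix positive reals d_V, γ, μ_T, μ_V and ℓ > 0, and let R₀ : ℝ² → ℝ be continuous, ℓ-periodic and everywhere positive. If V₁ and V₂ are two nonnegative, ℓ-periodic, twice continuously differentiable solutions of the steady-state virus equation d_V ΔV − μ_V V + μ_T μ_V R₀ V/(γV + μ_T) = 0 on ℝ², neither of which is identically zero, then V₁ = V₂. In other words, the equation admits at most one nontrivial nonnegative ℓ-periodic classical solution. -/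
/-- The Laplacian of a function on `ℝ²`. -/
noncomputable def lap (V : ℝ × ℝ → ℝ) (x : ℝ × ℝ) : ℝ :=
  deriv (fun s : ℝ => deriv (fun t : ℝ => V (t, x.2)) s) x.1 +
  deriv (fun s : ℝ => deriv (fun t : ℝ => V (x.1, t)) s) x.2

/-- `ℓ`-periodicity in each variable of a function on `ℝ²`. -/
def IsPer (ℓ : ℝ) (f : ℝ × ℝ → ℝ) : Prop :=
  ∀ x : ℝ × ℝ, f (x.1 + ℓ, x.2) = f x ∧ f (x.1, x.2 + ℓ) = f x

open Filter Topology Set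


lemma hasDerivAt_slice1 {u : ℝ × ℝ → ℝ} {s b : ℝ} (hu : DifferentiableAt ℝ u (s, b)) :
    HasDerivAt (fun t : ℝ => u (t, b)) (fderiv ℝ u (s, b) (1, 0)) s := by
  have h1 : HasDerivAt (fun t : ℝ => ((t, b) : ℝ × ℝ)) ((1 : ℝ), (0 : ℝ)) s :=
    (hasDerivAt_id s).prodMk (hasDerivAt_const s b)
  exact hu.hasFDerivAt.comp_hasDerivAt s h1

lemma hasDerivAt_slice2 {u : ℝ × ℝ → ℝ} {a s : ℝ} (hu : DifferentiableAt ℝ u (a, s)) :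
    HasDerivAt (fun t : ℝ => u (a, t)) (fderiv ℝ u (a, s) (0, 1)) s := by
  have h1 : HasDerivAt (fun t : ℝ => ((a, t) : ℝ × ℝ)) ((0 : ℝ), (1 : ℝ)) s :=
    (hasDerivAt_const s a).prodMk (hasDerivAt_id s)
  exact hu.hasFDerivAt.comp_hasDerivAt s h1

lemma fderiv_app_diff1 {u : ℝ × ℝ → ℝ} (hu : ContDiff ℝ 2 u) :
    Differentiable ℝ (fun p : ℝ × ℝ => fderiv ℝ u p (1, 0)) := by
  have h : ContDiff ℝ 1 (fderiv ℝ u) := hu.fderiv_right (by norm_num)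
  exact (ContinuousLinearMap.apply ℝ ℝ ((1:ℝ), (0:ℝ))).differentiable.comp (h.differentiable one_ne_zero)

lemma fderiv_app_diff2 {u : ℝ × ℝ → ℝ} (hu : ContDiff ℝ 2 u) :
    Differentiable ℝ (fun p : ℝ × ℝ => fderiv ℝ u p (0, 1)) := by
  have h : ContDiff ℝ 1 (fderiv ℝ u) := hu.fderiv_right (by norm_num)
  exact (ContinuousLinearMap.apply ℝ ℝ ((0:ℝ), (1:ℝ))).differentiable.comp (h.differentiable one_ne_zero)

lemma slice1_deriv_eq {u : ℝ × ℝ → ℝ} (hu : ContDiff ℝ 2 u) (b : ℝ) :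
    (fun s : ℝ => deriv (fun t : ℝ => u (t, b)) s) =
      (fun s : ℝ => fderiv ℝ u (s, b) (1, 0)) := by
  funext s
  exact (hasDerivAt_slice1 ((hu.differentiable (by norm_num)) (s, b))).deriv

lemma slice2_deriv_eq {u : ℝ × ℝ → ℝ} (hu : ContDiff ℝ 2 u) (a : ℝ) :
    (fun s : ℝ => deriv (fun t : ℝ => u (a, t)) s) =
      (fun s : ℝ => fderiv ℝ u (a, s) (0, 1)) := by
  funext s
  exact (hasDerivAt_slice2 ((hu.differentiable (by norm_num)) (a, s))).deriv

lemma A1_diff {u : ℝ × ℝ → ℝ} (hu : ContDiff ℝ 2 u) (b s : ℝ) :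
    DifferentiableAt ℝ (fun s : ℝ => fderiv ℝ u (s, b) (1, 0)) s := by
  have h1 : DifferentiableAt ℝ (fun t : ℝ => ((t, b) : ℝ × ℝ)) s :=
    (differentiable_id.prodMk (differentiable_const b)) s
  exact ((fderiv_app_diff1 hu) (s, b)).comp s h1

lemma A2_diff {u : ℝ × ℝ → ℝ} (hu : ContDiff ℝ 2 u) (a s : ℝ) :
    DifferentiableAt ℝ (fun s : ℝ => fderiv ℝ u (a, s) (0, 1)) s := by
  have h1 : DifferentiableAt ℝ (fun t : ℝ => ((a, t) : ℝ × ℝ)) s :=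
    ((differentiable_const a).prodMk differentiable_id) s
  exact ((fderiv_app_diff2 hu) (a, s)).comp s h1

/-- `lap` is linear on C² functions: `lap (u - c•v) = lap u - c * lap v`. -/
lemma lap_sub_smul {u v : ℝ × ℝ → ℝ} (hu : ContDiff ℝ 2 u) (hv : ContDiff ℝ 2 v)
    (c : ℝ) (p : ℝ × ℝ) :
    lap (fun x => u x - c * v x) p = lap u p - c * lap v p := by
  have hud := hu.differentiable (by norm_num)
  have hvd := hv.differentiable (by norm_num)
  have inner1 : (fun s : ℝ => deriv (fun t : ℝ => u (t, p.2) - c * v (t, p.2)) s) =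
      (fun s : ℝ => fderiv ℝ u (s, p.2) (1, 0) - c * fderiv ℝ v (s, p.2) (1, 0)) := by
    funext s
    exact ((hasDerivAt_slice1 (hud (s, p.2))).sub
      ((hasDerivAt_slice1 (hvd (s, p.2))).const_mul c)).deriv
  have inner2 : (fun s : ℝ => deriv (fun t : ℝ => u (p.1, t) - c * v (p.1, t)) s) =
      (fun s : ℝ => fderiv ℝ u (p.1, s) (0, 1) - c * fderiv ℝ v (p.1, s) (0, 1)) := by
    funext s
    exact ((hasDerivAt_slice2 (hud (p.1, s))).sub
      ((hasDerivAt_slice2 (hvd (p.1, s))).const_mul c)).deriv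
  have e1 : deriv (fun s : ℝ => fderiv ℝ u (s, p.2) (1, 0) - c * fderiv ℝ v (s, p.2) (1, 0)) p.1
      = deriv (fun s : ℝ => fderiv ℝ u (s, p.2) (1, 0)) p.1
        - c * deriv (fun s : ℝ => fderiv ℝ v (s, p.2) (1, 0)) p.1 := by
    rw [deriv_fun_sub (A1_diff hu p.2 p.1) ((A1_diff hv p.2 p.1).const_mul c),
        deriv_const_mul c (A1_diff hv p.2 p.1)]
  have e2 : deriv (fun s : ℝ => fderiv ℝ u (p.1, s) (0, 1) - c * fderiv ℝ v (p.1, s) (0, 1)) p.2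
      = deriv (fun s : ℝ => fderiv ℝ u (p.1, s) (0, 1)) p.2
        - c * deriv (fun s : ℝ => fderiv ℝ v (p.1, s) (0, 1)) p.2 := by
    rw [deriv_fun_sub (A2_diff hu p.1 p.2) ((A2_diff hv p.1 p.2).const_mul c),
        deriv_const_mul c (A2_diff hv p.1 p.2)]
  simp only [lap, inner1, inner2, e1, e2, slice1_deriv_eq hu, slice1_deriv_eq hv,
    slice2_deriv_eq hu, slice2_deriv_eq hv]
  ring

/-- 1D second-derivative test: at a local min of a C² function the second derivative is ≥ 0. -/
lemma deriv2_nonneg_of_isLocalMin {f : ℝ → ℝ} (hf : ContDiff ℝ 2 f) {a : ℝ}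
    (h : IsLocalMin f a) : 0 ≤ deriv (deriv f) a := by
  by_contra hneg
  push_neg at hneg
  have hf1 : Differentiable ℝ f := hf.differentiable (by norm_num)
  have hdf : ContDiff ℝ 1 (deriv f) := by
    have h2 : ContDiff ℝ (1 + 1) f := by
      have : ((2 : WithTop ℕ∞)) = 1 + 1 := by norm_num
      rwa [this] at hf
    exact (contDiff_succ_iff_deriv.mp h2).2.2
  have hdfd : Differentiable ℝ (deriv f) := hdf.differentiable one_ne_zero
  have hda : deriv f a = 0 := h.deriv_eq_zero
  have hT : Tendsto (slope (deriv f) a) (𝓝[≠] a) (𝓝 (deriv (deriv f) a)) := by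
    rw [← hasDerivAt_iff_tendsto_slope]
    exact (hdfd a).hasDerivAt
  have hT' : Tendsto (slope (deriv f) a) (𝓝[>] a) (𝓝 (deriv (deriv f) a)) :=
    hT.mono_left (nhdsWithin_mono a fun x hx => ne_of_gt hx)
  have hev : ∀ᶠ t in 𝓝[>] a, slope (deriv f) a t < 0 := hT'.eventually (gt_mem_nhds hneg)
  have hev2 : ∀ᶠ t in 𝓝[>] a, deriv f t < 0 := by
    filter_upwards [hev, self_mem_nhdsWithin] with t hst (ht : a < t)
    have hsl : (deriv f t - deriv f a) / (t - a) < 0 := by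
      rw [slope_def_field] at hst; exact hst
    rw [hda, sub_zero] at hsl
    have := mul_neg_of_neg_of_pos hsl (sub_pos.mpr ht)
    rwa [div_mul_cancel₀ _ (sub_ne_zero.mpr (ne_of_gt ht))] at this
  obtain ⟨u, hu, hIoo⟩ := mem_nhdsGT_iff_exists_Ioo_subset.mp hev2
  have hanti : StrictAntiOn f (Icc a u) := by
    apply strictAntiOn_of_deriv_neg (convex_Icc a u) (hf1.continuous.continuousOn)
    intro x hx
    rw [interior_Icc] at hx
    exact hIoo hx
  have hu' : a < u := hu
  have hevlt : ∀ᶠ x in 𝓝[>] a, f x < f a := by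
    filter_upwards [Ioo_mem_nhdsGT_of_mem ⟨le_rfl, hu'⟩] with x hx
    exact hanti ⟨le_rfl, hu'.le⟩ ⟨hx.1.le, hx.2.le⟩ hx.1
  have hge : ∀ᶠ x in 𝓝[>] a, f a ≤ f x := h.filter_mono nhdsWithin_le_nhds
  obtain ⟨x, h1, h2⟩ := (hevlt.and hge).exists
  linarith

/-- 2D second-derivative test: at a local min of a C² function, the Laplacian is ≥ 0. -/
lemma lap_nonneg_of_isLocalMin {w : ℝ × ℝ → ℝ} (hw : ContDiff ℝ 2 w) {p : ℝ × ℝ}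
    (h : IsLocalMin w p) : 0 ≤ lap w p := by
  have hg1 : ContDiff ℝ 2 (fun t : ℝ => w (t, p.2)) :=
    hw.comp (contDiff_id.prodMk contDiff_const)
  have hg2 : ContDiff ℝ 2 (fun t : ℝ => w (p.1, t)) :=
    hw.comp (contDiff_const.prodMk contDiff_id)
  have hc1 : ContinuousAt (fun t : ℝ => ((t, p.2) : ℝ × ℝ)) p.1 :=
    (continuous_id.prodMk continuous_const).continuousAt
  have hc2 : ContinuousAt (fun t : ℝ => ((p.1, t) : ℝ × ℝ)) p.2 :=
    (continuous_const.prodMk continuous_id).continuousAt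
  have hm1 : IsLocalMin (fun t : ℝ => w (t, p.2)) p.1 := by
    have := hc1.preimage_mem_nhds (h : {x | w p ≤ w x} ∈ 𝓝 p)
    exact this
  have hm2 : IsLocalMin (fun t : ℝ => w (p.1, t)) p.2 := by
    have := hc2.preimage_mem_nhds (h : {x | w p ≤ w x} ∈ 𝓝 p)
    exact this
  have t1 := deriv2_nonneg_of_isLocalMin hg1 hm1
  have t2 := deriv2_nonneg_of_isLocalMin hg2 hm2
  have : lap w p = deriv (deriv fun t : ℝ => w (t, p.2)) p.1 +
      deriv (deriv fun t : ℝ => w (p.1, t)) p.2 := rfl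
  rw [this]
  linarith

lemma gauss_hasDerivAt (α a k : ℝ) (t : ℝ) :
    HasDerivAt (fun t : ℝ => Real.exp (-α * ((t - a) ^ 2 + k)))
      (Real.exp (-α * ((t - a) ^ 2 + k)) * (-α * (2 * (t - a)))) t := by
  have h1 : HasDerivAt (fun t : ℝ => -α * ((t - a) ^ 2 + k)) (-α * (2 * (t - a))) t := by
    have h2 : HasDerivAt (fun t : ℝ => (t - a) ^ 2 + k) (2 * (t - a)) t := by
      have h3 : HasDerivAt (fun t : ℝ => t - a) 1 t := (hasDerivAt_id t).sub_const a
      simpa using (h3.pow 2).add_const k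
    simpa using h2.const_mul (-α)
  simpa [mul_comm] using h1.exp

/-- Laplacian of the Gaussian barrier. -/
lemma lap_gauss (α a b C : ℝ) (p : ℝ × ℝ) :
    lap (fun x : ℝ × ℝ => Real.exp (-α * ((x.1 - a) ^ 2 + (x.2 - b) ^ 2)) - C) p =
      Real.exp (-α * ((p.1 - a) ^ 2 + (p.2 - b) ^ 2)) *
        (4 * α ^ 2 * ((p.1 - a) ^ 2 + (p.2 - b) ^ 2) - 4 * α) := by
  have key : ∀ (k c : ℝ) (s : ℝ),
      deriv (fun s : ℝ => deriv (fun t : ℝ => Real.exp (-α * ((t - c) ^ 2 + k)) - C) s) s =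
        Real.exp (-α * ((s - c) ^ 2 + k)) * (4 * α ^ 2 * (s - c) ^ 2 - 2 * α) := by
    intro k c s
    have inner : (fun s : ℝ => deriv (fun t : ℝ => Real.exp (-α * ((t - c) ^ 2 + k)) - C) s) =
        (fun s : ℝ => Real.exp (-α * ((s - c) ^ 2 + k)) * (-α * (2 * (s - c)))) := by
      funext s
      exact ((gauss_hasDerivAt α c k s).sub_const C).deriv
    rw [inner]
    have outer : HasDerivAt (fun s : ℝ => Real.exp (-α * ((s - c) ^ 2 + k)) * (-α * (2 * (s - c))))
        (Real.exp (-α * ((s - c) ^ 2 + k)) * (-α * (2 * (s - c))) * (-α * (2 * (s - c)))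
          + Real.exp (-α * ((s - c) ^ 2 + k)) * (-α * 2)) s := by
      have h3 : HasDerivAt (fun s : ℝ => -α * (2 * (s - c))) (-α * 2) s := by
        have : HasDerivAt (fun s : ℝ => s - c) 1 s := (hasDerivAt_id s).sub_const c
        simpa [mul_assoc] using (this.const_mul 2).const_mul (-α)
      exact (gauss_hasDerivAt α c k s).mul h3
    rw [outer.deriv]
    ring
  have e1 := key ((p.2 - b) ^ 2) a p.1
  have e2 : deriv (fun s : ℝ => deriv (fun t : ℝ =>
      Real.exp (-α * ((p.1 - a) ^ 2 + (t - b) ^ 2)) - C) s) p.2 =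
      Real.exp (-α * ((p.1 - a) ^ 2 + (p.2 - b) ^ 2)) *
        (4 * α ^ 2 * (p.2 - b) ^ 2 - 2 * α) := by
    have := key ((p.1 - a) ^ 2) b p.2
    simpa [add_comm] using this
  have : lap (fun x : ℝ × ℝ => Real.exp (-α * ((x.1 - a) ^ 2 + (x.2 - b) ^ 2)) - C) p =
      deriv (fun s : ℝ => deriv (fun t : ℝ =>
        Real.exp (-α * ((t - a) ^ 2 + (p.2 - b) ^ 2)) - C) s) p.1 +
      deriv (fun s : ℝ => deriv (fun t : ℝ =>
        Real.exp (-α * ((p.1 - a) ^ 2 + (t - b) ^ 2)) - C) s) p.2 := rfl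
  rw [this, e1, e2]
  ring

lemma gauss_contDiff (α a b C : ℝ) :
    ContDiff ℝ 2 (fun x : ℝ × ℝ =>
      Real.exp (-α * ((x.1 - a) ^ 2 + (x.2 - b) ^ 2)) - C) := by
  apply ContDiff.sub _ contDiff_const
  apply (Real.contDiff_exp.of_le le_top).comp
  apply ContDiff.mul contDiff_const
  exact ((contDiff_fst.sub contDiff_const).pow 2).add ((contDiff_snd.sub contDiff_const).pow 2)

/-- Squared Euclidean distance to `y`. -/
private def sqd (y x : ℝ × ℝ) : ℝ := (x.1 - y.1) ^ 2 + (x.2 - y.2) ^ 2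

lemma sqd_cont (y : ℝ × ℝ) : Continuous (sqd y) := by
  unfold sqd; fun_prop

lemma sqd_compact_preimage (y : ℝ × ℝ) {M : ℝ} (hM : 0 ≤ M) (S : Set (ℝ × ℝ))
    (hS : IsClosed S) : IsCompact (S ∩ sqd y ⁻¹' (Set.Iic M)) := by
  apply Metric.isCompact_of_isClosed_isBounded
  · exact hS.inter (isClosed_Iic.preimage (sqd_cont y))
  · apply (Metric.isBounded_closedBall (x := y) (r := Real.sqrt M)).subset
    intro x hx
    have hx2 : sqd y x ≤ M := hx.2
    have h1 : |x.1 - y.1| ≤ Real.sqrt M := by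
      rw [← Real.sqrt_sq_eq_abs]
      apply Real.sqrt_le_sqrt
      have : (x.2 - y.2) ^ 2 ≥ 0 := sq_nonneg _
      unfold sqd at hx2; linarith
    have h2 : |x.2 - y.2| ≤ Real.sqrt M := by
      rw [← Real.sqrt_sq_eq_abs]
      apply Real.sqrt_le_sqrt
      have : (x.1 - y.1) ^ 2 ≥ 0 := sq_nonneg _
      unfold sqd at hx2; linarith
    rw [Metric.mem_closedBall, Prod.dist_eq]
    simp only [Real.dist_eq]
    exact max_le h1 h2

lemma sqd_compact_Iic (y : ℝ × ℝ) (M : ℝ) : IsCompact (sqd y ⁻¹' (Set.Iic M)) := by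
  have := sqd_compact_preimage y (M := max M 0) (le_max_right _ _) Set.univ isClosed_univ
  rw [Set.univ_inter] at this
  apply this.of_isClosed_subset (isClosed_Iic.preimage (sqd_cont y))
  intro x hx
  simp only [Set.mem_preimage, Set.mem_Iic] at hx ⊢
  exact le_trans hx (le_max_left _ _)

/-- Strong minimum principle: a nonnegative, nontrivial C² function satisfying
`lap V ≤ c₁ · V` is everywhere positive. -/
lemma sol_pos {V : ℝ × ℝ → ℝ} {c₁ : ℝ} (hc₁ : 0 < c₁) (hreg : ContDiff ℝ 2 V)
    (hnn : ∀ x, 0 ≤ V x) (hne : ¬ ∀ x, V x = 0)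
    (hlap : ∀ x, lap V x ≤ c₁ * V x) : ∀ x, 0 < V x := by
  by_contra hcon
  push_neg at hcon
  obtain ⟨x₀, hx₀⟩ := hcon
  have hVx₀ : V x₀ = 0 := le_antisymm hx₀ (hnn x₀)
  push_neg at hne
  obtain ⟨y, hy⟩ := hne
  have hVy : 0 < V y := lt_of_le_of_ne (hnn y) (Ne.symm hy)
  have hVcont : Continuous V := hreg.continuous
  -- the zero set and the nearest zero
  set Z : Set (ℝ × ℝ) := {x | V x = 0} with hZdef
  have hZclosed : IsClosed Z := isClosed_eq hVcont continuous_const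
  have hK₀ : IsCompact (Z ∩ sqd y ⁻¹' (Set.Iic (sqd y x₀))) :=
    (sqd_compact_Iic y (sqd y x₀)).inter_left hZclosed
  have hK₀ne : (Z ∩ sqd y ⁻¹' (Set.Iic (sqd y x₀))).Nonempty :=
    ⟨x₀, hVx₀, Set.mem_preimage.mpr (Set.mem_Iic.mpr le_rfl)⟩
  obtain ⟨z, hzK, hzmin⟩ := hK₀.exists_isMinOn hK₀ne ((sqd_cont y).continuousOn)
  have hzZ : V z = 0 := hzK.1
  set R2 : ℝ := sqd y z with hR2def
  have hsqd_nonneg : ∀ x, 0 ≤ sqd y x := fun x => add_nonneg (sq_nonneg _) (sq_nonneg _)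
  have hR2pos : 0 < R2 := by
    rcases (hsqd_nonneg z).lt_or_eq with h | h
    · exact h
    · exfalso
      have h1 : (z.1 - y.1) ^ 2 = 0 := by
        have := sq_nonneg (z.2 - y.2); have := sq_nonneg (z.1 - y.1)
        unfold sqd at h; linarith
      have h2 : (z.2 - y.2) ^ 2 = 0 := by
        have := sq_nonneg (z.1 - y.1)
        unfold sqd at h; linarith
      have hz1 : z.1 = y.1 := by nlinarith [h1]
      have hz2 : z.2 = y.2 := by nlinarith [h2]
      have : z = y := Prod.ext hz1 hz2
      rw [this] at hzZ
      exact hy hzZ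
  have hZR2 : ∀ x, V x = 0 → R2 ≤ sqd y x := by
    intro x hx
    by_cases hb : sqd y x ≤ sqd y x₀
    · exact hzmin ⟨hx, hb⟩
    · push_neg at hb
      have h1 : R2 ≤ sqd y x₀ := hzmin ⟨hVx₀, Set.mem_preimage.mpr (Set.mem_Iic.mpr le_rfl)⟩
      linarith
  -- radius and barrier exponent
  set R : ℝ := Real.sqrt R2 with hRdef
  have hRpos : 0 < R := Real.sqrt_pos.mpr hR2pos
  have hRsq : R ^ 2 = R2 := Real.sq_sqrt hR2pos.le
  set α : ℝ := (5 + c₁) * (1 + 1 / R2) with hαdef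
  have hα1 : 1 ≤ α := by
    have h1 : (0:ℝ) < 1 / R2 := by positivity
    nlinarith
  have hαpos : 0 < α := lt_of_lt_of_le one_pos hα1
  have hαR2 : 5 + c₁ ≤ α * R2 := by
    rw [hαdef]
    have h1 : R2 * (1 / R2) = 1 := by field_simp
    nlinarith
  have hkey : ∀ r2 : ℝ, R2 / 4 ≤ r2 → c₁ ≤ 4 * α ^ 2 * r2 - 4 * α := by
    intro r2 hr2
    have h1 : α * (5 + c₁) ≤ α * (α * R2) := mul_le_mul_of_nonneg_left hαR2 hαpos.le
    have h2 : α ^ 2 * R2 ≤ 4 * α ^ 2 * r2 := by nlinarith [sq_nonneg α]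
    nlinarith
  -- the inner disc and its minimum
  have hDcomp : IsCompact (sqd y ⁻¹' (Set.Iic (R2 / 4))) := sqd_compact_Iic y (R2 / 4)
  have hDne : (sqd y ⁻¹' (Set.Iic (R2 / 4))).Nonempty := by
    refine ⟨y, Set.mem_preimage.mpr (Set.mem_Iic.mpr ?_)⟩
    unfold sqd; nlinarith
  obtain ⟨q, hqD, hqmin⟩ := hDcomp.exists_isMinOn hDne hVcont.continuousOn
  set m : ℝ := V q with hmdef
  have hmpos : 0 < m := by
    rcases (hnn q).lt_or_eq with h | h
    · exact h
    · exfalso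
      have := hZR2 q h.symm
      have hq2 : sqd y q ≤ R2 / 4 := hqD
      linarith
  -- the barrier and the comparison function on the annulus
  set C : ℝ := Real.exp (-α * R2) with hCdef
  set h : (ℝ × ℝ) → ℝ :=
    fun x => Real.exp (-α * ((x.1 - y.1) ^ 2 + (x.2 - y.2) ^ 2)) - C with hhdef
  have hhC : ContDiff ℝ 2 h := gauss_contDiff α y.1 y.2 C
  have hsqd_eq : ∀ x : ℝ × ℝ, (x.1 - y.1) ^ 2 + (x.2 - y.2) ^ 2 = sqd y x := fun x => rfl
  set K : Set (ℝ × ℝ) := sqd y ⁻¹' (Set.Icc (R2 / 4) R2) with hKdef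
  have hKcomp : IsCompact K :=
    (sqd_compact_Iic y R2).of_isClosed_subset (isClosed_Icc.preimage (sqd_cont y))
      (fun x hx => Set.mem_preimage.mpr (Set.mem_Iic.mpr (Set.mem_preimage.mp hx).2))
  have hKne : K.Nonempty := by
    refine ⟨(y.1 + R, y.2), Set.mem_preimage.mpr ?_⟩
    have : sqd y (y.1 + R, y.2) = R2 := by unfold sqd; simp; nlinarith
    rw [this]
    exact Set.mem_Icc.mpr ⟨by linarith, le_rfl⟩
  set w : (ℝ × ℝ) → ℝ := fun x => V x - m * h x with hwdef
  have hwC : ContDiff ℝ 2 w := hreg.sub (contDiff_const.mul hhC)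
  obtain ⟨p, hpK, hpmin⟩ := hKcomp.exists_isMinOn hKne hwC.continuous.continuousOn
  have hpK' : sqd y p ∈ Set.Icc (R2 / 4) R2 := hpK
  -- the minimum of w on the annulus is nonnegative
  have hw0 : 0 ≤ w p := by
    by_contra hwp
    push_neg at hwp
    -- p cannot be on the inner circle
    have hinner : sqd y p ≠ R2 / 4 := by
      intro heq
      have hpD : p ∈ sqd y ⁻¹' (Set.Iic (R2 / 4)) :=
        Set.mem_preimage.mpr (Set.mem_Iic.mpr (le_of_eq heq))
      have hVp : m ≤ V p := hqmin hpD
      have hhple : h p ≤ 1 := by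
        have h1 : Real.exp (-α * ((p.1 - y.1) ^ 2 + (p.2 - y.2) ^ 2)) ≤ 1 := by
          apply Real.exp_le_one_iff.mpr
          have := hsqd_nonneg p
          rw [hsqd_eq p]
          nlinarith
        have h2 : 0 < C := Real.exp_pos _
        simp only [hhdef]; linarith
      have : 0 ≤ w p := by
        simp only [hwdef]
        nlinarith
      linarith
    -- p cannot be on the outer circle
    have houter : sqd y p ≠ R2 := by
      intro heq
      have : h p = 0 := by
        simp only [hhdef, hsqd_eq p, heq, hCdef, sub_self]
      have : 0 ≤ w p := by
        simp only [hwdef, this, mul_zero, sub_zero]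
        exact hnn p
      linarith
    -- so p is interior to the annulus
    have hpIoo : sqd y p ∈ Set.Ioo (R2 / 4) R2 :=
      ⟨lt_of_le_of_ne hpK'.1 (Ne.symm hinner), lt_of_le_of_ne hpK'.2 houter⟩
    have hKnhds : K ∈ 𝓝 p := by
      apply Filter.mem_of_superset ((isOpen_Ioo.preimage (sqd_cont y)).mem_nhds hpIoo)
      exact fun x hx => Set.mem_preimage.mpr (Set.Ioo_subset_Icc_self (Set.mem_preimage.mp hx))
    have hloc : IsLocalMin w p := hpmin.isLocalMin hKnhds
    have hlapw : 0 ≤ lap w p := lap_nonneg_of_isLocalMin hwC hloc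
    have hlapw_eq : lap w p = lap V p - m * lap h p := lap_sub_smul hreg hhC m p
    have hlaph : lap h p = Real.exp (-α * sqd y p) *
        (4 * α ^ 2 * sqd y p - 4 * α) := by
      have h9 := lap_gauss α y.1 y.2 C p
      rw [hhdef]
      simpa [hsqd_eq p, neg_mul] using h9
    set E : ℝ := Real.exp (-α * sqd y p) with hEdef
    have hEpos : 0 < E := Real.exp_pos _
    have hhpE : h p ≤ E := by
      have h2 : 0 < C := Real.exp_pos _
      simp only [hhdef, hsqd_eq p, ← hEdef]
      linarith
    have hX : c₁ ≤ 4 * α ^ 2 * sqd y p - 4 * α := hkey _ hpK'.1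
    have hlapV : lap V p ≤ c₁ * V p := hlap p
    -- assemble the contradiction
    have h3 : m * (E * c₁) ≤ m * (E * (4 * α ^ 2 * sqd y p - 4 * α)) :=
      mul_le_mul_of_nonneg_left (mul_le_mul_of_nonneg_left hX hEpos.le) hmpos.le
    have h4 : m * (c₁ * h p) ≤ m * (c₁ * E) :=
      mul_le_mul_of_nonneg_left (mul_le_mul_of_nonneg_left hhpE hc₁.le) hmpos.le
    have hwp' : V p - m * h p < 0 := hwp
    have h0 : 0 ≤ lap V p - m * (E * (4 * α ^ 2 * sqd y p - 4 * α)) := by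
      rw [hlapw_eq, hlaph] at hlapw
      exact hlapw
    have h6 : c₁ * (V p - m * h p) < 0 := mul_neg_of_pos_of_neg hc₁ hwp'
    linarith [h0, hlapV, h3, h4, h6]
  -- V dominates the barrier on the annulus
  have hVK : ∀ x ∈ K, m * h x ≤ V x := by
    intro x hx
    have h1 : w p ≤ w x := hpmin hx
    have h2 : (0:ℝ) ≤ V x - m * h x := le_trans hw0 h1
    linarith
  -- the ray from the nearest zero z towards y
  have hRne : R ≠ 0 := ne_of_gt hRpos
  set ν1 : ℝ := (y.1 - z.1) / R with hν1
  set ν2 : ℝ := (y.2 - z.2) / R with hν2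
  set g : ℝ → ℝ := fun t => V (z.1 + t * ν1, z.2 + t * ν2) with hgdef
  have hAB : (y.1 - z.1) ^ 2 + (y.2 - z.2) ^ 2 = R ^ 2 := by
    rw [hRsq, hR2def]; unfold sqd; ring
  have hsqpt : ∀ t : ℝ, sqd y (z.1 + t * ν1, z.2 + t * ν2) = (R - t) ^ 2 := by
    intro t
    show (z.1 + t * ν1 - y.1) ^ 2 + (z.2 + t * ν2 - y.2) ^ 2 = (R - t) ^ 2
    rw [hν1, hν2]
    have e1 : z.1 + t * ((y.1 - z.1) / R) - y.1 = (y.1 - z.1) * (t - R) / R := by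
      field_simp; ring
    have e2 : z.2 + t * ((y.2 - z.2) / R) - y.2 = (y.2 - z.2) * (t - R) / R := by
      field_simp; ring
    rw [e1, e2, div_pow, div_pow, ← add_div]
    rw [div_eq_iff (by positivity : R ^ 2 ≠ 0)]
    linear_combination (t - R) ^ 2 * hAB
  set c0 : ℝ := m * (C * (α * R)) with hc0def
  have hc0pos : 0 < c0 := by
    have : 0 < C := Real.exp_pos _
    positivity
  have hbound : ∀ t : ℝ, t ∈ Set.Ioc 0 (R / 2) → c0 * t ≤ g t := by
    intro t ht
    have ht1 : 0 < t := ht.1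
    have ht2 : t ≤ R / 2 := ht.2
    have hq1 : R / 2 ≤ R - t := by linarith
    have hq2 : (0:ℝ) ≤ R - t := by linarith
    have hmem : sqd y (z.1 + t * ν1, z.2 + t * ν2) ∈ Set.Icc (R2 / 4) R2 := by
      rw [hsqpt t]
      constructor
      · have h10 := pow_le_pow_left₀ (by linarith : (0:ℝ) ≤ R / 2) hq1 2
        rw [← hRsq]
        calc R ^ 2 / 4 = (R / 2) ^ 2 := by ring
        _ ≤ (R - t) ^ 2 := h10
      · have h10 := pow_le_pow_left₀ hq2 (by linarith : R - t ≤ R) 2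
        rw [← hRsq]; exact h10
    have hinK : (z.1 + t * ν1, z.2 + t * ν2) ∈ K := Set.mem_preimage.mpr hmem
    have h1 : m * h (z.1 + t * ν1, z.2 + t * ν2) ≤ g t := hVK _ hinK
    have h2 : h (z.1 + t * ν1, z.2 + t * ν2) =
        Real.exp (-α * (R - t) ^ 2) - C := by
      have hsq' : (z.1 + t * ν1 - y.1) ^ 2 + (z.2 + t * ν2 - y.2) ^ 2 = (R - t) ^ 2 :=
        hsqpt t
      simp only [hhdef]
      rw [hsq']
    rw [h2] at h1
    -- lower bound for the barrier along the ray
    have e3 : -α * (R - t) ^ 2 = -α * R2 + α * (t * (2 * R - t)) := by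
      rw [← hRsq]; ring
    have e4 : Real.exp (-α * (R - t) ^ 2) = C * Real.exp (α * (t * (2 * R - t))) := by
      rw [e3, Real.exp_add, hCdef]
    have e5 : α * (t * (2 * R - t)) + 1 ≤ Real.exp (α * (t * (2 * R - t))) :=
      Real.add_one_le_exp _
    have hCpos : (0:ℝ) < C := Real.exp_pos _
    have e6 : C * (α * R * t) ≤ Real.exp (-α * (R - t) ^ 2) - C := by
      rw [e4]
      have h7 : α * (R * t) ≤ α * (t * (2 * R - t)) := by
        linarith [mul_nonneg hαpos.le (mul_nonneg ht1.le hq2)]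
      have h7b := mul_le_mul_of_nonneg_left e5 hCpos.le
      have h7c := mul_le_mul_of_nonneg_left h7 hCpos.le
      linarith
    have h8 : c0 * t ≤ m * (Real.exp (-α * (R - t) ^ 2) - C) := by
      rw [hc0def]
      have h11 := mul_le_mul_of_nonneg_left e6 hmpos.le
      linarith [h11]
    linarith
  -- derivative of V along the ray at z is 0, contradiction
  have hg0 : g 0 = 0 := by
    have : (z.1 + 0 * ν1, z.2 + 0 * ν2) = z := by
      simp
    rw [hgdef]
    simp only [this]
    exact hzZ
  have hgmin : IsLocalMin g 0 := Filter.Eventually.of_forall fun t => by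
    rw [hg0]; exact hnn _
  have hgdiff : DifferentiableAt ℝ g 0 := by
    have hA : DifferentiableAt ℝ (fun t : ℝ => ((z.1 + t * ν1, z.2 + t * ν2) : ℝ × ℝ)) 0 := by
      fun_prop
    exact ((hreg.differentiable (by norm_num)) _).comp 0 hA
  have hder : deriv g 0 = 0 := hgmin.deriv_eq_zero
  have hHD : HasDerivAt g 0 0 := by
    have := hgdiff.hasDerivAt
    rwa [hder] at this
  have hT : Filter.Tendsto (slope g 0) (𝓝[>] 0) (𝓝 0) :=
    (hasDerivAt_iff_tendsto_slope.mp hHD).mono_left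
      (nhdsWithin_mono _ fun x hx => ne_of_gt hx)
  have hev : ∀ᶠ t in 𝓝[>] (0:ℝ), c0 ≤ slope g 0 t := by
    filter_upwards [Ioc_mem_nhdsGT_of_mem ⟨le_rfl, half_pos hRpos⟩] with t ht
    rw [slope_def_field, hg0, sub_zero, sub_zero, le_div_iff₀ ht.1]
    exact hbound t ht
  have : c0 ≤ 0 := ge_of_tendsto hT hev
  linarith


/-- Comparison of two positive periodic solutions (the sublinearity trick). -/
lemma sols_le {dV γ μT μV ℓ : ℝ}
    (hdV : 0 < dV) (hγ : 0 < γ) (hμT : 0 < μT) (hμV : 0 < μV) (hℓ : 0 < ℓ)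
    {R₀ u₁ u₂ : ℝ × ℝ → ℝ} (hR₀pos : ∀ x, 0 < R₀ x)
    (h₁pos : ∀ x, 0 < u₁ x) (h₁per : IsPer ℓ u₁) (h₁reg : ContDiff ℝ 2 u₁)
    (h₁eq : ∀ x, dV * lap u₁ x - μV * u₁ x + μT * μV * R₀ x * u₁ x / (γ * u₁ x + μT) = 0)
    (h₂pos : ∀ x, 0 < u₂ x) (h₂per : IsPer ℓ u₂) (h₂reg : ContDiff ℝ 2 u₂)
    (h₂eq : ∀ x, dV * lap u₂ x - μV * u₂ x + μT * μV * R₀ x * u₂ x / (γ * u₂ x + μT) = 0) :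
    ∀ x, u₁ x ≤ u₂ x := by
  set ρ : ℝ × ℝ → ℝ := fun x => u₂ x / u₁ x with hρdef
  have hρcont : Continuous ρ :=
    h₂reg.continuous.div h₁reg.continuous (fun x => ne_of_gt (h₁pos x))
  set Q : Set (ℝ × ℝ) := Set.Icc 0 ℓ ×ˢ Set.Icc 0 ℓ with hQdef
  have hQcomp : IsCompact Q := isCompact_Icc.prod isCompact_Icc
  have hQne : Q.Nonempty := ⟨(0, 0), ⟨⟨le_rfl, hℓ.le⟩, ⟨le_rfl, hℓ.le⟩⟩⟩
  obtain ⟨xs, hxsQ, hxsmin⟩ := hQcomp.exists_isMinOn hQne hρcont.continuousOn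
  have hθpos : 0 < ρ xs := div_pos (h₂pos xs) (h₁pos xs)
  -- the minimum over the period square is a global minimum, by periodicity
  have hper : ∀ x : ℝ × ℝ, ρ xs ≤ ρ x := by
    intro x
    have hp1 : Function.Periodic (fun t => ρ (t, x.2)) ℓ := by
      intro t
      have e1 : u₁ (t + ℓ, x.2) = u₁ (t, x.2) := (h₁per (t, x.2)).1
      have e2 : u₂ (t + ℓ, x.2) = u₂ (t, x.2) := (h₂per (t, x.2)).1
      simp only [hρdef]
      rw [e1, e2]
    obtain ⟨t', ht', he1⟩ := hp1.exists_mem_Ico₀ hℓ x.1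
    have he1' : ρ (x.1, x.2) = ρ (t', x.2) := he1
    have hp2 : Function.Periodic (fun s => ρ (t', s)) ℓ := by
      intro s
      have e1 : u₁ (t', s + ℓ) = u₁ (t', s) := (h₁per (t', s)).2
      have e2 : u₂ (t', s + ℓ) = u₂ (t', s) := (h₂per (t', s)).2
      simp only [hρdef]
      rw [e1, e2]
    obtain ⟨s', hs', he2⟩ := hp2.exists_mem_Ico₀ hℓ x.2
    have he2' : ρ (t', x.2) = ρ (t', s') := he2
    have hmem : (t', s') ∈ Q :=
      Set.mem_prod.mpr ⟨⟨ht'.1, ht'.2.le⟩, ⟨hs'.1, hs'.2.le⟩⟩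
    have h3 : ρ xs ≤ ρ (t', s') := hxsmin hmem
    have h4 : ρ x = ρ (x.1, x.2) := by rw [Prod.mk.eta]
    rw [h4, he1', he2']
    exact h3
  have hle : ∀ x, ρ xs * u₁ x ≤ u₂ x := by
    intro x
    have h1 := hper x
    rw [hρdef] at h1
    exact (le_div_iff₀ (h₁pos x)).mp h1
  have heqs : u₂ xs = ρ xs * u₁ xs := by
    simp only [hρdef]
    rw [div_mul_cancel₀ _ (ne_of_gt (h₁pos xs))]
  have hθ1 : 1 ≤ ρ xs := by
    by_contra hθlt
    push_neg at hθlt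
    set θ : ℝ := ρ xs with hθdef
    set w : ℝ × ℝ → ℝ := fun x => u₂ x - θ * u₁ x with hwdef
    have hwC : ContDiff ℝ 2 w := h₂reg.sub (contDiff_const.mul h₁reg)
    have hwnn : ∀ x, 0 ≤ w x := fun x => by
      have := hle x; simp only [hwdef]; linarith
    have hw0 : w xs = 0 := by simp only [hwdef]; linarith [heqs]
    have hmin : IsLocalMin w xs := Filter.Eventually.of_forall fun x => by
      rw [hw0]; exact hwnn x
    have hlapw : 0 ≤ lap w xs := lap_nonneg_of_isLocalMin hwC hmin
    have hlapw_eq : lap w xs = lap u₂ xs - θ * lap u₁ xs := lap_sub_smul h₂reg h₁reg θ xs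
    have hs : 0 < u₁ xs := h₁pos xs
    have hr : 0 < R₀ xs := hR₀pos xs
    have hd1 : 0 < γ * u₁ xs + μT := by positivity
    have hd2 : 0 < γ * (θ * u₁ xs) + μT := by positivity
    have he1 := h₁eq xs
    have he2 := h₂eq xs
    rw [heqs] at he2
    -- strict sublinearity of s ↦ s/(γs+μT)
    have hkey : θ * (μT * μV * R₀ xs * u₁ xs / (γ * u₁ xs + μT)) <
        μT * μV * R₀ xs * (θ * u₁ xs) / (γ * (θ * u₁ xs) + μT) := by
      have e0 : θ * (μT * μV * R₀ xs * u₁ xs / (γ * u₁ xs + μT)) =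
          θ * (μT * μV * R₀ xs * u₁ xs) / (γ * u₁ xs + μT) := by ring
      rw [e0, div_lt_div_iff₀ hd1 hd2]
      have hint : 0 < μT * μV * R₀ xs * θ * u₁ xs * (γ * u₁ xs) * (1 - θ) := by
        have h1 : (0:ℝ) < 1 - θ := by linarith
        positivity
      nlinarith [hint]
    have hneg : dV * lap w xs < 0 := by
      have e1 : dV * lap w xs = dV * lap u₂ xs - θ * (dV * lap u₁ xs) := by
        rw [hlapw_eq]; ring
      have e2 : dV * lap u₂ xs =
          μV * (θ * u₁ xs) - μT * μV * R₀ xs * (θ * u₁ xs) / (γ * (θ * u₁ xs) + μT) := by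
        linarith [he2]
      have e3 : dV * lap u₁ xs =
          μV * u₁ xs - μT * μV * R₀ xs * u₁ xs / (γ * u₁ xs + μT) := by
        linarith [he1]
      rw [e1, e2, e3]
      ring_nf
      ring_nf at hkey
      rw [add_comm μT (u₁ xs * γ)] at hkey
      linarith
    have hpos : 0 ≤ dV * lap w xs := mul_nonneg hdV.le hlapw
    linarith
  intro x
  have h1 := hle x
  have h2 := mul_le_mul_of_nonneg_right hθ1 (h₁pos x).le
  linarith

/-- the steady-state virus equation has at most one nontrivial
nonnegative periodic classical solution. -/
theorem stmt_4 (dV γ μT μV ℓ : ℝ)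
    (hdV : 0 < dV) (hγ : 0 < γ) (hμT : 0 < μT) (hμV : 0 < μV) (hℓ : 0 < ℓ)
    (R₀ : ℝ × ℝ → ℝ) (hR₀cont : Continuous R₀) (hR₀per : IsPer ℓ R₀)
    (hR₀pos : ∀ x, 0 < R₀ x)
    (V₁ V₂ : ℝ × ℝ → ℝ)
    (hV₁nonneg : ∀ x, 0 ≤ V₁ x) (hV₁per : IsPer ℓ V₁)
    (hV₁reg : ContDiff ℝ 2 V₁)
    (hV₁eq : ∀ x, dV * lap V₁ x - μV * V₁ x +
      μT * μV * R₀ x * V₁ x / (γ * V₁ x + μT) = 0)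
    (hV₁ne : ¬ ∀ x, V₁ x = 0)
    (hV₂nonneg : ∀ x, 0 ≤ V₂ x) (hV₂per : IsPer ℓ V₂)
    (hV₂reg : ContDiff ℝ 2 V₂)
    (hV₂eq : ∀ x, dV * lap V₂ x - μV * V₂ x +
      μT * μV * R₀ x * V₂ x / (γ * V₂ x + μT) = 0)
    (hV₂ne : ¬ ∀ x, V₂ x = 0) :
    V₁ = V₂ := by
  have hc₁ : 0 < μV / dV := div_pos hμV hdV
  have hlapbd : ∀ (V : ℝ × ℝ → ℝ), (∀ x, 0 ≤ V x) →
      (∀ x, dV * lap V x - μV * V x + μT * μV * R₀ x * V x / (γ * V x + μT) = 0) →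
      ∀ x, lap V x ≤ (μV / dV) * V x := by
    intro V hnn heq x
    have hF : 0 ≤ μT * μV * R₀ x * V x / (γ * V x + μT) := by
      apply div_nonneg
      · have := (hR₀pos x).le
        have := hnn x
        positivity
      · have := hnn x
        positivity
    have h1 : dV * lap V x ≤ μV * V x := by linarith [heq x]
    rw [div_mul_eq_mul_div, le_div_iff₀ hdV]
    linarith
  have hV₁pos : ∀ x, 0 < V₁ x :=
    sol_pos hc₁ hV₁reg hV₁nonneg hV₁ne (hlapbd V₁ hV₁nonneg hV₁eq)
  have hV₂pos : ∀ x, 0 < V₂ x :=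
    sol_pos hc₁ hV₂reg hV₂nonneg hV₂ne (hlapbd V₂ hV₂nonneg hV₂eq)
  have h12 := sols_le hdV hγ hμT hμV hℓ hR₀pos hV₁pos hV₁per hV₁reg hV₁eq
    hV₂pos hV₂per hV₂reg hV₂eq
  have h21 := sols_le hdV hγ hμT hμV hℓ hR₀pos hV₂pos hV₂per hV₂reg hV₂eq
    hV₁pos hV₁per hV₁reg hV₁eq
  funext x
  exact le_antisymm (h12 x) (h21 x)
end

section
/- Let μ_T, μ_I, μ_V, N, d_V be positive real numbers, R₀ > 1 a real number, and λ_k ≥ 0 a real number. Consider the real 3×3 matrix M_k = [[−μ_T R₀, 0, −μ_V/N], [μ_T(R₀ − 1), −μ_I, μ_V/N], [0, N μ_I, −λ_k d_V − μ_V]]. Then every complex eigenvalue of M_k has negative real part. -/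
set_option maxHeartbeats 1000000 in
/-- for `R₀ > 1` and `λ_k ≥ 0` every complex eigenvalue of the
Fourier-mode matrix `M_k` has negative real part. -/
theorem stmt_11 (R₀ μT μI μV N dV lamk : ℝ)
    (hμT : 0 < μT) (hμI : 0 < μI) (hμV : 0 < μV) (hN : 0 < N)
    (hdV : 0 < dV) (hR₀ : 1 < R₀) (hlamk : 0 ≤ lamk)
    (Mk : Matrix (Fin 3) (Fin 3) ℝ)
    (hMk : Mk = !![-μT * R₀, 0, -μV / N;
                   μT * (R₀ - 1), -μI, μV / N;
                   0, N * μI, -lamk * dV - μV]) :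
    ∀ z ∈ spectrum ℂ (Mk.map (algebraMap ℝ ℂ)), z.re < 0 := by
  intro z hz
  rw [spectrum.mem_iff] at hz
  have hdet : (algebraMap ℂ (Matrix (Fin 3) (Fin 3) ℂ) z - Mk.map (algebraMap ℝ ℂ)).det = 0 := by
    by_contra h
    exact hz ((Matrix.isUnit_iff_isUnit_det _).mpr (isUnit_iff_ne_zero.mpr h))
  subst hMk
  rw [Matrix.det_fin_three] at hdet
  simp only [Matrix.sub_apply, Matrix.map_apply, Matrix.algebraMap_matrix_apply,
    Matrix.cons_val', Matrix.cons_val_zero, Matrix.cons_val_one, Matrix.head_cons,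
    Matrix.empty_val', Matrix.cons_val_fin_one, Matrix.head_fin_const,
    Fin.isValue, if_true, if_false, Matrix.cons_val_two, Matrix.tail_cons] at hdet
  norm_num [Fin.ext_iff] at hdet
  simp [Matrix.vecHead, Matrix.vecTail] at hdet
  have hN' : (N : ℂ) ≠ 0 := by exact_mod_cast hN.ne'
  have keyN : (N : ℂ) * (z ^ 3
      + ((μT * R₀ + μI + (lamk * dV + μV) : ℝ) : ℂ) * z ^ 2
      + ((μT * R₀ * μI + μT * R₀ * (lamk * dV + μV) + μI * (lamk * dV + μV) - μI * μV : ℝ) : ℂ) * z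
      + ((μT * R₀ * μI * (lamk * dV + μV) - μT * μI * μV : ℝ) : ℂ)) = 0 := by
    field_simp at hdet
    push_cast
    linear_combination (N : ℂ) * hdet
  have key := (mul_eq_zero.mp keyN).resolve_left hN'
  rw [Complex.ext_iff] at key
  simp only [Complex.add_re, Complex.add_im, Complex.mul_re, Complex.mul_im,
    Complex.ofReal_re, Complex.ofReal_im, Complex.zero_re, Complex.zero_im,
    pow_succ, pow_zero, one_mul, Complex.one_re, Complex.one_im] at key
  obtain ⟨hre, him⟩ := key
  set x := z.re with hxdef
  set y := z.im with hydef
  -- opaque coefficients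
  obtain ⟨A, hAdef⟩ : ∃ a : ℝ, a = μT * R₀ + μI + (lamk * dV + μV) := ⟨_, rfl⟩
  obtain ⟨B, hBdef⟩ : ∃ b : ℝ,
      b = μT * R₀ * μI + μT * R₀ * (lamk * dV + μV) + μI * (lamk * dV + μV) - μI * μV := ⟨_, rfl⟩
  obtain ⟨C, hCdef⟩ : ∃ c : ℝ, c = μT * R₀ * μI * (lamk * dV + μV) - μT * μI * μV := ⟨_, rfl⟩
  have hre' : x ^ 3 - 3 * x * y ^ 2 + A * (x ^ 2 - y ^ 2) + B * x + C = 0 := by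
    rw [hAdef, hBdef, hCdef]; linear_combination hre
  have him' : y * (3 * x ^ 2 - y ^ 2 + 2 * A * x + B) = 0 := by
    rw [hAdef, hBdef]; linear_combination him
  have hc : (0:ℝ) < lamk * dV + μV := by positivity
  have hA : 0 < A := by rw [hAdef]; positivity
  have ht : μI * μV ≤ μI * (lamk * dV + μV) := by
    nlinarith [mul_nonneg (mul_nonneg hμI.le hlamk) hdV.le]
  have ha : (0:ℝ) < μT * R₀ := by positivity
  have hB : 0 < B := by
    rw [hBdef]
    nlinarith [mul_pos ha hμI, mul_pos ha hc, ht]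
  have hC : 0 < C := by
    rw [hCdef]
    nlinarith [mul_nonneg (mul_nonneg (mul_nonneg hμT.le (by positivity : (0:ℝ) ≤ R₀)) hμI.le)
        (mul_nonneg hlamk hdV.le),
      mul_pos (mul_pos hμT hμI) (mul_pos hμV (sub_pos.mpr hR₀))]
  have hABC : C < A * B := by
    rw [hAdef, hBdef, hCdef]
    nlinarith [mul_le_mul_of_nonneg_left ht ha.le,
      mul_le_mul_of_nonneg_left ht hμI.le,
      mul_le_mul_of_nonneg_left ht hc.le,
      mul_nonneg (mul_nonneg ha.le ha.le) hμI.le,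
      mul_nonneg (mul_nonneg ha.le ha.le) hc.le,
      mul_nonneg (mul_nonneg ha.le hμI.le) hμI.le,
      mul_nonneg (mul_nonneg ha.le hc.le) hc.le,
      mul_pos (mul_pos ha hμI) hc,
      mul_pos (mul_pos hμT hμI) hμV]
  by_contra hxc
  push_neg at hxc
  rcases eq_or_ne y 0 with hy | hy
  · rw [hy] at hre'
    nlinarith [hre', mul_nonneg (mul_nonneg hxc hxc) hxc, mul_nonneg hA.le (mul_nonneg hxc hxc),
      mul_nonneg hB.le hxc, hC]
  · have hQ : 3 * x ^ 2 - y ^ 2 + 2 * A * x + B = 0 := (mul_eq_zero.mp him').resolve_left hy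
    have key3 : 8 * x ^ 3 + 8 * A * x ^ 2 + (2 * B + 2 * A ^ 2) * x + (A * B - C) = 0 := by
      linear_combination (-1 : ℝ) * hre' + (3 * x + A) * hQ
    nlinarith [key3, mul_nonneg (mul_nonneg hxc hxc) hxc, mul_nonneg hA.le (mul_nonneg hxc hxc),
      mul_nonneg hB.le hxc, mul_nonneg (mul_nonneg hA.le hA.le) hxc, hABC]
end

section
/- Fix positive reals d_V, γ, μ_T, μ_V and ℓ > 0, and let m > 1 be a real constant. Then the nonnegative, ℓ-periodic, twice continuously differentiable solutions V : ℝ² → ℝ of d_V ΔV − μ_V V + μ_T μ_V m V/(γV + μ_T) = 0 on ℝ² are exactly the two constant functions V ≡ 0 and V ≡ μ_T(m − 1)/γ. If instead 0 < m ≤ 1, the only nonnegative ℓ-periodic twice continuously differentiable solution is V ≡ 0. -/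
open MeasureTheory Set Filter Topology

section Aux

lemma pd1 {W : ℝ × ℝ → ℝ} (hW : Differentiable ℝ W) (s y : ℝ) :
    HasDerivAt (fun t => W (t, y)) (fderiv ℝ W (s, y) (1, 0)) s := by
  have h := ((hW (s, y)).hasFDerivAt).comp_hasDerivAt s
    ((hasDerivAt_id s).prodMk (hasDerivAt_const s y))
  simpa [Function.comp_def] using h

lemma pd2 {W : ℝ × ℝ → ℝ} (hW : Differentiable ℝ W) (x t : ℝ) :
    HasDerivAt (fun s => W (x, s)) (fderiv ℝ W (x, t) (0, 1)) t := by
  have h := ((hW (x, t)).hasFDerivAt).comp_hasDerivAt t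
    ((hasDerivAt_const t x).prodMk (hasDerivAt_id t))
  simpa [Function.comp_def] using h

lemma periodic_deriv' {f : ℝ → ℝ} {c : ℝ} (hf : Function.Periodic f c) (x : ℝ) :
    deriv f (x + c) = deriv f x := by
  have h : (fun y => f (y + c)) = f := funext hf
  rw [← deriv_comp_add_const, h]

lemma mySetIntegral_prod_symm (f : ℝ × ℝ → ℝ) {S T : Set ℝ}
    (hf : IntegrableOn f (S ×ˢ T)) :
    ∫ z in S ×ˢ T, f z = ∫ y in T, ∫ x in S, f (x, y) := by
  have h1 : (volume : Measure (ℝ × ℝ)).restrict (S ×ˢ T)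
      = ((volume : Measure ℝ).restrict S).prod ((volume : Measure ℝ).restrict T) := by
    rw [Measure.volume_eq_prod, Measure.prod_restrict]
  rw [show (∫ z in S ×ˢ T, f z) = ∫ z, f z ∂((volume : Measure ℝ).restrict S).prod
      ((volume : Measure ℝ).restrict T) by rw [← h1]]
  have hf' : Integrable f (((volume : Measure ℝ).restrict S).prod
      ((volume : Measure ℝ).restrict T)) := by rwa [← h1]
  exact integral_prod_symm f hf'

lemma mySetIntegral_prod (f : ℝ × ℝ → ℝ) {S T : Set ℝ}
    (hf : IntegrableOn f (S ×ˢ T)) :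
    ∫ z in S ×ˢ T, f z = ∫ x in S, ∫ y in T, f (x, y) := by
  have h1 : (volume : Measure (ℝ × ℝ)).restrict (S ×ˢ T)
      = ((volume : Measure ℝ).restrict S).prod ((volume : Measure ℝ).restrict T) := by
    rw [Measure.volume_eq_prod, Measure.prod_restrict]
  rw [show (∫ z in S ×ˢ T, f z) = ∫ z, f z ∂((volume : Measure ℝ).restrict S).prod
      ((volume : Measure ℝ).restrict T) by rw [← h1]]
  have hf' : Integrable f (((volume : Measure ℝ).restrict S).prod
      ((volume : Measure ℝ).restrict T)) := by rwa [← h1]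
  exact integral_prod f hf'

lemma cell_integral_lap_zero {ℓ : ℝ} (hℓ : 0 < ℓ) {V : ℝ × ℝ → ℝ}
    (hV : ContDiff ℝ 2 V) (hper : IsPer ℓ V) (a b : ℝ) :
    ∫ x in Set.Icc a (a + ℓ) ×ˢ Set.Icc b (b + ℓ), lap V x = 0 := by
  have hVd : Differentiable ℝ V := hV.differentiable (by norm_num)
  set A₁ : ℝ × ℝ → ℝ := fun p => fderiv ℝ V p (1, 0) with hA₁def
  set A₂ : ℝ × ℝ → ℝ := fun p => fderiv ℝ V p (0, 1) with hA₂def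
  have hA₁ : ContDiff ℝ 1 A₁ := (hV.fderiv_right (by norm_num)).clm_apply contDiff_const
  have hA₂ : ContDiff ℝ 1 A₂ := (hV.fderiv_right (by norm_num)).clm_apply contDiff_const
  have hA₁d : Differentiable ℝ A₁ := hA₁.differentiable one_ne_zero
  have hA₂d : Differentiable ℝ A₂ := hA₂.differentiable one_ne_zero
  set D₁ : ℝ × ℝ → ℝ := fun p => fderiv ℝ A₁ p (1, 0) with hD₁def
  set D₂ : ℝ × ℝ → ℝ := fun p => fderiv ℝ A₂ p (0, 1) with hD₂def
  have hD₁c : Continuous D₁ := (hA₁.continuous_fderiv one_ne_zero).clm_apply continuous_const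
  have hD₂c : Continuous D₂ := (hA₂.continuous_fderiv one_ne_zero).clm_apply continuous_const
  have e1 : ∀ y, (fun t => deriv (fun t' => V (t', y)) t) = fun t => A₁ (t, y) :=
    fun y => funext fun t => (pd1 hVd t y).deriv
  have e2 : ∀ x, (fun t => deriv (fun t' => V (x, t')) t) = fun t => A₂ (x, t) :=
    fun x => funext fun t => (pd2 hVd x t).deriv
  have hlap : ∀ x : ℝ × ℝ, lap V x = D₁ x + D₂ x := by
    intro x
    have k1 : deriv (fun s => deriv (fun t => V (t, x.2)) s) x.1 = D₁ x := by
      rw [show (fun s => deriv (fun t => V (t, x.2)) s) = fun s => A₁ (s, x.2) from e1 x.2]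
      rw [(pd1 hA₁d x.1 x.2).deriv]
    have k2 : deriv (fun s => deriv (fun t => V (x.1, t)) s) x.2 = D₂ x := by
      rw [show (fun s => deriv (fun t => V (x.1, t)) s) = fun s => A₂ (x.1, s) from e2 x.1]
      rw [(pd2 hA₂d x.1 x.2).deriv]
    rw [lap, k1, k2]
  set S := Set.Icc a (a + ℓ)
  set T := Set.Icc b (b + ℓ)
  have hint₁ : IntegrableOn D₁ (S ×ˢ T) := hD₁c.continuousOn.integrableOn_compact
    (isCompact_Icc.prod isCompact_Icc)
  have hint₂ : IntegrableOn D₂ (S ×ˢ T) := hD₂c.continuousOn.integrableOn_compact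
    (isCompact_Icc.prod isCompact_Icc)
  have hcongr : ∫ x in S ×ˢ T, lap V x = (∫ x in S ×ˢ T, D₁ x) + ∫ x in S ×ˢ T, D₂ x := by
    rw [show (fun x => lap V x) = fun x => D₁ x + D₂ x from funext hlap]
    exact integral_add hint₁ hint₂
  have hI2 : ∫ x in S ×ˢ T, D₂ x = 0 := by
    rw [mySetIntegral_prod D₂ hint₂]
    have inner : ∀ x : ℝ, (∫ y in T, D₂ (x, y)) = 0 := by
      intro x
      set g : ℝ → ℝ := fun u => V (x, u) with hgdef
      have hgd : (fun y => D₂ (x, y)) = deriv (deriv g) := by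
        funext y
        have : deriv g = fun t => A₂ (x, t) := e2 x
        rw [this, (pd2 hA₂d x y).deriv]
      have hgper : Function.Periodic g ℓ := fun t => (hper (x, t)).2
      have hderiv_diff : ∀ y ∈ Set.uIcc b (b + ℓ), DifferentiableAt ℝ (deriv g) y := by
        intro y _
        rw [show deriv g = fun t => A₂ (x, t) from e2 x]
        exact (pd2 hA₂d x y).differentiableAt
      have hcont : IntervalIntegrable (deriv (deriv g)) volume b (b + ℓ) := by
        rw [← hgd]
        exact (hD₂c.comp (continuous_const.prodMk continuous_id)).intervalIntegrable b (b + ℓ)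
      rw [hgd]
      rw [show (∫ y in T, deriv (deriv g) y) = ∫ y in Set.Ioc b (b + ℓ), deriv (deriv g) y
        from integral_Icc_eq_integral_Ioc]
      rw [← intervalIntegral.integral_of_le (by linarith : b ≤ b + ℓ)]
      rw [intervalIntegral.integral_deriv_eq_sub hderiv_diff hcont]
      rw [periodic_deriv' hgper b, sub_self]
    simp only [inner, integral_zero]
  have hI1 : ∫ x in S ×ˢ T, D₁ x = 0 := by
    rw [mySetIntegral_prod_symm D₁ hint₁]
    have inner : ∀ y : ℝ, (∫ x in S, D₁ (x, y)) = 0 := by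
      intro y
      set g : ℝ → ℝ := fun u => V (u, y) with hgdef
      have hgd : (fun x => D₁ (x, y)) = deriv (deriv g) := by
        funext x
        have : deriv g = fun t => A₁ (t, y) := e1 y
        rw [this, (pd1 hA₁d x y).deriv]
      have hgper : Function.Periodic g ℓ := fun t => (hper (t, y)).1
      have hderiv_diff : ∀ x ∈ Set.uIcc a (a + ℓ), DifferentiableAt ℝ (deriv g) x := by
        intro x _
        rw [show deriv g = fun t => A₁ (t, y) from e1 y]
        exact (pd1 hA₁d x y).differentiableAt
      have hcont : IntervalIntegrable (deriv (deriv g)) volume a (a + ℓ) := by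
        rw [← hgd]
        exact (hD₁c.comp (continuous_id.prodMk continuous_const)).intervalIntegrable a (a + ℓ)
      rw [hgd]
      rw [show (∫ x in S, deriv (deriv g) x) = ∫ x in Set.Ioc a (a + ℓ), deriv (deriv g) x
        from integral_Icc_eq_integral_Ioc]
      rw [← intervalIntegral.integral_of_le (by linarith : a ≤ a + ℓ)]
      rw [intervalIntegral.integral_deriv_eq_sub hderiv_diff hcont]
      rw [periodic_deriv' hgper a, sub_self]
    simp only [inner, integral_zero]
  rw [hcongr, hI1, hI2, add_zero]

lemma second_deriv_nonpos_at_max {f f' : ℝ → ℝ} {a l : ℝ}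
    (hd : ∀ x, HasDerivAt f (f' x) x) (hd' : HasDerivAt f' l a)
    (hmax : IsLocalMax f a) : l ≤ 0 := by
  by_contra hc
  push_neg at hc
  have h0 : f' a = 0 := by
    have h := hmax.deriv_eq_zero
    rwa [(hd a).deriv] at h
  have hslope := hasDerivAt_iff_tendsto_slope.mp hd'
  have hmono : 𝓝[>] a ≤ 𝓝[≠] a :=
    nhdsWithin_mono a (fun x hx => ne_of_gt hx)
  have hev : ∀ᶠ x in 𝓝[>] a, 0 < slope f' a x :=
    (hslope.mono_left hmono).eventually (eventually_gt_nhds hc)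
  have hev' : ∀ᶠ x in 𝓝[>] a, 0 < f' x := by
    filter_upwards [hev, self_mem_nhdsWithin] with x hx hx'
    have hxa : (0:ℝ) < x - a := sub_pos.mpr hx'
    rw [slope_def_field, h0, sub_zero] at hx
    have h2 := mul_pos hx hxa
    rwa [div_mul_cancel₀ _ (ne_of_gt hxa)] at h2
  obtain ⟨u, hu, hsub⟩ := mem_nhdsGT_iff_exists_Ioo_subset.mp hev'
  have hmonof : StrictMonoOn f (Set.Ico a u) := by
    apply strictMonoOn_of_deriv_pos (convex_Ico a u)
    · exact fun x _ => (hd x).continuousAt.continuousWithinAt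
    · intro x hx
      rw [interior_Ico] at hx
      rw [(hd x).deriv]
      exact hsub hx
  have hloc : ∀ᶠ x in 𝓝[>] a, f x ≤ f a := hmax.filter_mono nhdsWithin_le_nhds
  have h2 : ∀ᶠ x in 𝓝[>] a, x ∈ Set.Ioo a u :=
    Ioo_mem_nhdsGT_of_mem ⟨le_refl a, hu⟩
  rcases (hloc.and h2).exists with ⟨x, hx1, hx2⟩
  have : f a < f x :=
    hmonof ⟨le_refl a, hu⟩ ⟨le_of_lt hx2.1, hx2.2⟩ hx2.1
  linarith

lemma reduce_frac {ℓ : ℝ} (hℓ : 0 < ℓ) (c : ℝ) :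
    ℓ * Int.fract (c / ℓ) ∈ Set.Icc 0 ℓ ∧
    ∀ f : ℝ → ℝ, Function.Periodic f ℓ → f (ℓ * Int.fract (c / ℓ)) = f c := by
  constructor
  · constructor
    · exact mul_nonneg hℓ.le (Int.fract_nonneg _)
    · calc ℓ * Int.fract (c / ℓ) ≤ ℓ * 1 :=
            mul_le_mul_of_nonneg_left (Int.fract_lt_one _).le hℓ.le
        _ = ℓ := mul_one ℓ
  · intro f hf
    have he : ℓ * Int.fract (c / ℓ) = c - (⌊c / ℓ⌋ : ℤ) * ℓ := by
      rw [Int.fract]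
      field_simp
    rw [he, hf.sub_int_mul_eq]

lemma exists_global_max {ℓ : ℝ} (hℓ : 0 < ℓ) {V : ℝ × ℝ → ℝ}
    (hVc : Continuous V) (hper : IsPer ℓ V) : ∃ x₀, ∀ x, V x ≤ V x₀ := by
  have hQ : IsCompact (Set.Icc (0:ℝ) ℓ ×ˢ Set.Icc (0:ℝ) ℓ) :=
    isCompact_Icc.prod isCompact_Icc
  have hne : (Set.Icc (0:ℝ) ℓ ×ˢ Set.Icc (0:ℝ) ℓ).Nonempty :=
    ⟨(0, 0), ⟨⟨le_refl 0, hℓ.le⟩, ⟨le_refl 0, hℓ.le⟩⟩⟩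
  obtain ⟨x₀, _, hx₀⟩ := hQ.exists_isMaxOn hne hVc.continuousOn
  refine ⟨x₀, fun p => ?_⟩
  have per1 : ∀ y, Function.Periodic (fun t => V (t, y)) ℓ := fun y t => (hper (t, y)).1
  have per2 : ∀ x, Function.Periodic (fun t => V (x, t)) ℓ := fun x t => (hper (x, t)).2
  set q1 := ℓ * Int.fract (p.1 / ℓ)
  set q2 := ℓ * Int.fract (p.2 / ℓ)
  have h1 := reduce_frac hℓ p.1
  have h2 := reduce_frac hℓ p.2
  have e1 : V (q1, q2) = V (p.1, q2) := h1.2 (fun t => V (t, q2)) (per1 q2)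
  have e2 : V (p.1, q2) = V (p.1, p.2) := h2.2 (fun t => V (p.1, t)) (per2 p.1)
  have hmem : (q1, q2) ∈ Set.Icc (0:ℝ) ℓ ×ˢ Set.Icc (0:ℝ) ℓ := ⟨h1.1, h2.1⟩
  have := hx₀ hmem
  simp only at this
  calc V p = V (p.1, p.2) := by rw [Prod.mk.eta]
    _ = V (q1, q2) := by rw [e1, e2]
    _ ≤ V x₀ := this

/-- At a global maximum of a C² periodic function, the Laplacian is nonpositive. -/
lemma lap_max {ℓ : ℝ} (hℓ : 0 < ℓ) {V : ℝ × ℝ → ℝ}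
    (hV : ContDiff ℝ 2 V) (hper : IsPer ℓ V) :
    ∃ x₀, (∀ x, V x ≤ V x₀) ∧ lap V x₀ ≤ 0 := by
  have hVd : Differentiable ℝ V := hV.differentiable (by norm_num)
  set A₁ : ℝ × ℝ → ℝ := fun p => fderiv ℝ V p (1, 0) with hA₁def
  set A₂ : ℝ × ℝ → ℝ := fun p => fderiv ℝ V p (0, 1) with hA₂def
  have hA₁ : ContDiff ℝ 1 A₁ := (hV.fderiv_right (by norm_num)).clm_apply contDiff_const
  have hA₂ : ContDiff ℝ 1 A₂ := (hV.fderiv_right (by norm_num)).clm_apply contDiff_const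
  have hA₁d : Differentiable ℝ A₁ := hA₁.differentiable one_ne_zero
  have hA₂d : Differentiable ℝ A₂ := hA₂.differentiable one_ne_zero
  obtain ⟨x₀, hx₀⟩ := exists_global_max hℓ hV.continuous hper
  refine ⟨x₀, hx₀, ?_⟩
  have hmax1 : IsLocalMax (fun t => V (t, x₀.2)) x₀.1 :=
    Filter.Eventually.of_forall (fun t => by
      simpa using hx₀ (t, x₀.2))
  have hmax2 : IsLocalMax (fun t => V (x₀.1, t)) x₀.2 :=
    Filter.Eventually.of_forall (fun t => by
      simpa using hx₀ (x₀.1, t))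
  have hterm1 : deriv (fun s => deriv (fun t => V (t, x₀.2)) s) x₀.1 ≤ 0 := by
    rw [show (fun s => deriv (fun t => V (t, x₀.2)) s) = fun s => A₁ (s, x₀.2) from
      funext fun s => (pd1 hVd s x₀.2).deriv]
    rw [(pd1 hA₁d x₀.1 x₀.2).deriv]
    exact second_deriv_nonpos_at_max (fun s => pd1 hVd s x₀.2) (pd1 hA₁d x₀.1 x₀.2) hmax1
  have hterm2 : deriv (fun s => deriv (fun t => V (x₀.1, t)) s) x₀.2 ≤ 0 := by
    rw [show (fun s => deriv (fun t => V (x₀.1, t)) s) = fun s => A₂ (x₀.1, s) from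
      funext fun s => (pd2 hVd x₀.1 s).deriv]
    rw [(pd2 hA₂d x₀.1 x₀.2).deriv]
    exact second_deriv_nonpos_at_max (fun s => pd2 hVd x₀.1 s) (pd2 hA₂d x₀.1 x₀.2) hmax2
  rw [lap]
  linarith

lemma zero_at_point {h : ℝ × ℝ → ℝ} (hc : Continuous h) (hnn : ∀ x, 0 ≤ h x)
    {s : Set (ℝ × ℝ)} (hint : IntegrableOn h s)
    (hzero : ∫ x in s, h x = 0) {p : ℝ × ℝ} {r : ℝ} (hr : 0 < r)
    (hball : Metric.ball p r ⊆ s) : h p = 0 := by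
  by_contra hne
  have hp : 0 < h p := lt_of_le_of_ne (hnn p) (Ne.symm hne)
  have hev : {x | h p / 2 < h x} ∈ 𝓝 p :=
    hc.continuousAt.preimage_mem_nhds (Ioi_mem_nhds (half_lt_self hp))
  obtain ⟨ε, hε, hsub⟩ := Metric.mem_nhds_iff.mp hev
  set r' := min ε r with hr'def
  have hr' : 0 < r' := lt_min hε hr
  have hball' : Metric.ball p r' ⊆ s := (Metric.ball_subset_ball (min_le_right ε r)).trans hball
  have hlb : ∀ x ∈ Metric.ball p r', h p / 2 ≤ h x := fun x hx =>
    le_of_lt (hsub (Metric.ball_subset_ball (min_le_left ε r) hx))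
  have hmeas : 0 < (volume (Metric.ball p r')).toReal := by
    refine ENNReal.toReal_pos (ne_of_gt (Metric.measure_ball_pos volume p hr')) ?_
    exact (measure_ball_lt_top).ne
  have h1 : ∫ x in Metric.ball p r', h x ≤ ∫ x in s, h x := by
    apply setIntegral_mono_set hint
    · exact Filter.Eventually.of_forall hnn
    · exact HasSubset.Subset.eventuallyLE hball'
  have h2 : (volume (Metric.ball p r')).toReal * (h p / 2) ≤ ∫ x in Metric.ball p r', h x := by
    have := setIntegral_mono_on (f := fun _ => h p / 2) (g := h)
      (integrableOn_const measure_ball_lt_top.ne)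
      (hint.mono_set hball') measurableSet_ball hlb
    simpa [Measure.restrict_apply, smul_eq_mul, measureReal_def] using this
  have : 0 < (volume (Metric.ball p r')).toReal * (h p / 2) :=
    mul_pos hmeas (by linarith)
  linarith

lemma ivt_dichotomy {V : ℝ × ℝ → ℝ} (hc : Continuous V) {K : ℝ} (hK : 0 < K)
    (hall : ∀ p, V p = 0 ∨ V p = K) {a b : ℝ × ℝ} (h0 : V a = 0) (hKb : V b = K) :
    False := by
  set f : ℝ → ℝ := fun t => V (a.1 + t * (b.1 - a.1), a.2 + t * (b.2 - a.2)) with hfdef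
  have hfc : Continuous f := by
    apply hc.comp
    exact (continuous_const.add (continuous_id.mul continuous_const)).prodMk
      (continuous_const.add (continuous_id.mul continuous_const))
  have hf0 : f 0 = 0 := by simp [hfdef, h0]
  have hf1 : f 1 = K := by simp [hfdef, hKb]
  have hmem : K / 2 ∈ Set.Icc (f 0) (f 1) := by
    rw [hf0, hf1]; constructor <;> linarith
  obtain ⟨t, _, ht⟩ := intermediate_value_Icc (by norm_num : (0:ℝ) ≤ 1) hfc.continuousOn hmem
  rcases hall (a.1 + t * (b.1 - a.1), a.2 + t * (b.2 - a.2)) with h | h <;>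
    rw [hfdef] at ht <;> simp only at ht <;> rw [ht] at h <;> linarith

lemma lap_const (c : ℝ) (x : ℝ × ℝ) : lap (fun _ => c) x = 0 := by
  simp [lap]

end Aux

theorem stmt_13 (dV γ μT μV ℓ m : ℝ)
    (hdV : 0 < dV) (hγ : 0 < γ) (hμT : 0 < μT) (hμV : 0 < μV) (hℓ : 0 < ℓ) :
    (1 < m →
      ∀ V : ℝ × ℝ → ℝ,
        (ContDiff ℝ 2 V ∧ IsPer ℓ V ∧ (∀ x, 0 ≤ V x) ∧
          (∀ x, dV * lap V x - μV * V x +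
            μT * μV * m * V x / (γ * V x + μT) = 0)) ↔
        (V = fun _ => 0) ∨ (V = fun _ => μT * (m - 1) / γ)) ∧
    (0 < m → m ≤ 1 →
      ∀ V : ℝ × ℝ → ℝ,
        (ContDiff ℝ 2 V ∧ IsPer ℓ V ∧ (∀ x, 0 ≤ V x) ∧
          (∀ x, dV * lap V x - μV * V x +
            μT * μV * m * V x / (γ * V x + μT) = 0)) ↔
        V = fun _ => 0) := by
  have hzero : ∀ V : ℝ × ℝ → ℝ, V = (fun _ => 0) →
      (ContDiff ℝ 2 V ∧ IsPer ℓ V ∧ (∀ x, 0 ≤ V x) ∧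
        (∀ x, dV * lap V x - μV * V x +
          μT * μV * m * V x / (γ * V x + μT) = 0)) := by
    rintro V rfl
    refine ⟨contDiff_const, fun x => ⟨rfl, rfl⟩, fun x => le_refl 0, fun x => ?_⟩
    rw [lap_const]
    simp
  constructor
  · intro hm V
    constructor
    · rintro ⟨hV, hper, hnn, heq⟩
      set K := μT * (m - 1) / γ with hKdef
      have hKpos : 0 < K := by
        apply div_pos _ hγ
        nlinarith
      have hgK : γ * K = μT * (m - 1) := by
        rw [hKdef]
        field_simp
      have hden : ∀ x, 0 < γ * V x + μT := by
        intro x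
        have := hnn x
        nlinarith
      have hlapeq : ∀ x, lap V x =
          μV * V x * (γ * V x - μT * (m - 1)) / ((γ * V x + μT) * dV) := by
        intro x
        have h := heq x
        have hd1 : γ * V x + μT ≠ 0 := ne_of_gt (hden x)
        have hd2 : dV ≠ 0 := ne_of_gt hdV
        have h' : μT * μV * m * V x / (γ * V x + μT) * (γ * V x + μT) = μT * μV * m * V x :=
          div_mul_cancel₀ _ hd1
        rw [eq_div_iff (mul_ne_zero hd1 hd2)]
        linear_combination (γ * V x + μT) * h - h'
      obtain ⟨x₀, hx₀, hlap0⟩ := lap_max hℓ hV hper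
      have hM : V x₀ ≤ K := by
        have h1 := hlapeq x₀
        rw [h1] at hlap0
        have hnum : μV * V x₀ * (γ * V x₀ - μT * (m - 1)) ≤ 0 := by
          by_contra hpos
          push_neg at hpos
          have := div_pos hpos (mul_pos (hden x₀) hdV)
          linarith
        by_contra hMgt
        push_neg at hMgt
        have hM0 : 0 < V x₀ := lt_trans hKpos hMgt
        have hfac : 0 < γ * V x₀ - μT * (m - 1) := by
          nlinarith [mul_pos hγ (sub_pos.mpr hMgt)]
        nlinarith [mul_pos (mul_pos hμV hM0) hfac]
      have hbound : ∀ x, V x ≤ K := fun x => le_trans (hx₀ x) hM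
      set N : ℝ × ℝ → ℝ := fun x =>
        μV * V x * (μT * (m - 1) - γ * V x) / ((γ * V x + μT) * dV) with hNdef
      have hNlap : ∀ x, N x = -lap V x := by
        intro x
        rw [hNdef, hlapeq x]
        ring
      have hNcont : Continuous N := by
        apply Continuous.div
        · exact (continuous_const.mul hV.continuous).mul
            (continuous_const.sub (continuous_const.mul hV.continuous))
        · exact ((continuous_const.mul hV.continuous).add continuous_const).mul
            continuous_const
        · exact fun x => ne_of_gt (mul_pos (hden x) hdV)
      have hNnn : ∀ x, 0 ≤ N x := by
        intro x
        apply div_nonneg _ (le_of_lt (mul_pos (hden x) hdV))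
        have h1 : γ * V x ≤ μT * (m - 1) := by
          have := hbound x
          nlinarith
        have := hnn x
        exact mul_nonneg (mul_nonneg hμV.le this) (sub_nonneg.mpr h1)
      have hN0 : ∀ p, N p = 0 := by
        intro p
        have hcell := cell_integral_lap_zero hℓ hV hper (p.1 - ℓ / 2) (p.2 - ℓ / 2)
        set Q := Set.Icc (p.1 - ℓ / 2) (p.1 - ℓ / 2 + ℓ) ×ˢ
          Set.Icc (p.2 - ℓ / 2) (p.2 - ℓ / 2 + ℓ) with hQdef
        have hintN : IntegrableOn N Q := hNcont.continuousOn.integrableOn_compact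
          (isCompact_Icc.prod isCompact_Icc)
        have hNint0 : ∫ x in Q, N x = 0 := by
          rw [show (fun x => N x) = fun x => -(lap V x) from funext hNlap]
          rw [integral_neg, hcell, neg_zero]
        have hballsub : Metric.ball p (ℓ / 2) ⊆ Q := by
          intro q hq
          rw [Metric.mem_ball] at hq
          have hd1 : dist q.1 p.1 ≤ dist q p := le_max_left _ _
          have hd2 : dist q.2 p.2 ≤ dist q p := le_max_right _ _
          rw [Real.dist_eq] at hd1 hd2
          have ha1 := abs_lt.mp (lt_of_le_of_lt hd1 hq)
          have ha2 := abs_lt.mp (lt_of_le_of_lt hd2 hq)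
          constructor
          · constructor <;> [linarith [ha1.1]; linarith [ha1.2]]
          · constructor <;> [linarith [ha2.1]; linarith [ha2.2]]
        exact zero_at_point hNcont hNnn hintN hNint0 (half_pos hℓ) hballsub
      have hval : ∀ p, V p = 0 ∨ V p = K := by
        intro p
        have h := hN0 p
        rw [hNdef] at h
        have hnum : μV * V p * (μT * (m - 1) - γ * V p) = 0 :=
          (div_eq_zero_iff.mp h).resolve_right (ne_of_gt (mul_pos (hden p) hdV))
        rcases mul_eq_zero.mp hnum with h1 | h2
        · rcases mul_eq_zero.mp h1 with h1a | h1b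
          · exact absurd h1a (ne_of_gt hμV)
          · exact Or.inl h1b
        · right
          rw [hKdef]
          field_simp
          linarith
      by_cases hz : ∀ p, V p = 0
      · left
        funext p
        exact hz p
      · right
        push_neg at hz
        obtain ⟨q, hq⟩ := hz
        have hqK : V q = K := (hval q).resolve_left hq
        funext p
        rcases hval p with h | h
        · exact absurd (ivt_dichotomy hV.continuous hKpos hval h hqK) not_false
        · exact h
    · rintro (rfl | rfl)
      · exact hzero _ rfl
      · set K := μT * (m - 1) / γ with hKdef
        have hKpos : 0 < K := by
          apply div_pos _ hγ
          nlinarith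
        have hdenK : γ * K + μT = μT * m := by
          rw [hKdef]
          field_simp
          ring
        refine ⟨contDiff_const, fun x => ⟨rfl, rfl⟩, fun x => hKpos.le, fun x => ?_⟩
        rw [lap_const, mul_zero, hdenK]
        have hμTm : μT * m ≠ 0 := by positivity
        field_simp
        ring
  · intro hm0 hm1 V
    constructor
    · rintro ⟨hV, hper, hnn, heq⟩
      have hden : ∀ x, 0 < γ * V x + μT := by
        intro x
        have := hnn x
        nlinarith
      have hlapeq : ∀ x, lap V x =
          μV * V x * (γ * V x - μT * (m - 1)) / ((γ * V x + μT) * dV) := by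
        intro x
        have h := heq x
        have hd1 : γ * V x + μT ≠ 0 := ne_of_gt (hden x)
        have hd2 : dV ≠ 0 := ne_of_gt hdV
        have h' : μT * μV * m * V x / (γ * V x + μT) * (γ * V x + μT) = μT * μV * m * V x :=
          div_mul_cancel₀ _ hd1
        rw [eq_div_iff (mul_ne_zero hd1 hd2)]
        linear_combination (γ * V x + μT) * h - h'
      obtain ⟨x₀, hx₀, hlap0⟩ := lap_max hℓ hV hper
      have hM : V x₀ = 0 := by
        have h1 := hlapeq x₀
        rw [h1] at hlap0
        have hnum : μV * V x₀ * (γ * V x₀ - μT * (m - 1)) ≤ 0 := by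
          by_contra hpos
          push_neg at hpos
          have := div_pos hpos (mul_pos (hden x₀) hdV)
          linarith
        by_contra hne
        have hM0 : 0 < V x₀ := lt_of_le_of_ne (hnn x₀) (Ne.symm hne)
        have hfac : 0 < γ * V x₀ - μT * (m - 1) := by
          nlinarith [mul_pos hγ hM0, mul_nonneg hμT.le (by linarith : (0:ℝ) ≤ 1 - m)]
        nlinarith [mul_pos (mul_pos hμV hM0) hfac]
      funext p
      have := hx₀ p
      rw [hM] at this
      exact le_antisymm this (hnn p)
    · rintro rfl
      exact hzero _ rfl
end
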